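/- Let A be a Hermitian operator on ℂ^d, let v ∈ ℝ with |v| ≤ ‖A‖_∞, let η, δ ≥ 0, and let Π be the spectral projector of A onto the direct sum of its eigenspaces with eigenvalue in [v − η Σ(A), v + η Σ(A)]. If a density matrix ω on ℂ^d satisfies Tr(ω Π) ≥ 1 − δ, then |Tr(ω A) − v| ≤ η Σ(A) + 2 δ ‖A‖_∞. -/

import Mathlib

open Matrix BigOperators
open scoped ComplexOrder

/-- Functional calculus for a Hermitian matrix: apply `f` to the eigenvalues.
(Returns `0` if the matrix is not Hermitian.) -/
noncomputable def matFun {n : Type*} [Fintype n] [DecidableEq n]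
    (f : ℝ → ℝ) (A : Matrix n n ℂ) : Matrix n n ℂ :=
  if hA : A.IsHermitian then
    (hA.eigenvectorUnitary : Matrix n n ℂ) *
      Matrix.diagonal (fun i => (f (hA.eigenvalues i) : ℂ)) *
      (star hA.eigenvectorUnitary : Matrix n n ℂ)
  else 0

/-- Spectral projector of a Hermitian matrix onto the direct sum of the
eigenspaces with eigenvalue in the closed interval `[a, b]`. -/
noncomputable def specProj {n : Type*} [Fintype n] [DecidableEq n]
    (A : Matrix n n ℂ) (a b : ℝ) : Matrix n n ℂ :=
  matFun (Set.indicator (Set.Icc a b) fun _ => (1 : ℝ)) A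

/-- Largest eigenvalue of a Hermitian matrix. -/
noncomputable def eigMax {n : Type*} [Fintype n] [DecidableEq n]
    (A : Matrix n n ℂ) : ℝ :=
  if hA : A.IsHermitian then ⨆ i, hA.eigenvalues i else 0

/-- Smallest eigenvalue of a Hermitian matrix. -/
noncomputable def eigMin {n : Type*} [Fintype n] [DecidableEq n]
    (A : Matrix n n ℂ) : ℝ :=
  if hA : A.IsHermitian then ⨅ i, hA.eigenvalues i else 0

/-- Spectral diameter `Σ(A) = λ_max(A) - λ_min(A)` of a Hermitian matrix. -/
noncomputable def specDiam {n : Type*} [Fintype n] [DecidableEq n]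
    (A : Matrix n n ℂ) : ℝ :=
  eigMax A - eigMin A

/-- Operator norm `‖A‖_∞` of a Hermitian matrix: the largest absolute value
of an eigenvalue. -/
noncomputable def opNorm {n : Type*} [Fintype n] [DecidableEq n]
    (A : Matrix n n ℂ) : ℝ :=
  if hA : A.IsHermitian then ⨆ i, |hA.eigenvalues i| else 0

/-- The single-site operator `I^{⊗ℓ} ⊗ Q ⊗ I^{⊗(N-1-ℓ)}` on `(ℂ^d)^{⊗N}`. -/
noncomputable def siteOp {d : ℕ} (Q : Matrix (Fin d) (Fin d) ℂ) (N : ℕ) (ℓ : Fin N) :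
    Matrix (Fin N → Fin d) (Fin N → Fin d) ℂ :=
  Matrix.of fun x y =>
    (∏ k ∈ Finset.univ.erase ℓ, if x k = y k then (1 : ℂ) else 0) * Q (x ℓ) (y ℓ)

/-- The average operator `Q̄ := (1/N) Σ_ℓ I^{⊗ℓ} ⊗ Q ⊗ I^{⊗(N-1-ℓ)}` on `(ℂ^d)^{⊗N}`. -/
noncomputable def avgOp {d : ℕ} (Q : Matrix (Fin d) (Fin d) ℂ) (N : ℕ) :
    Matrix (Fin N → Fin d) (Fin N → Fin d) ℂ :=
  (N : ℂ)⁻¹ • ∑ ℓ : Fin N, siteOp Q N ℓ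

/-- The `N`-fold tensor power `ρ^{⊗N}` on `(ℂ^d)^{⊗N}`. -/
noncomputable def tensorPow {d : ℕ} (ρ : Matrix (Fin d) (Fin d) ℂ) (N : ℕ) :
    Matrix (Fin N → Fin d) (Fin N → Fin d) ℂ :=
  Matrix.of fun x y => ∏ ℓ, ρ (x ℓ) (y ℓ)

/-- The reduced state on the `ℓ`-th tensor factor: partial trace over all
tensor factors except the `ℓ`-th. -/
noncomputable def reduceAt {d N : ℕ}
    (Ω : Matrix (Fin N → Fin d) (Fin N → Fin d) ℂ) (ℓ : Fin N) :
    Matrix (Fin d) (Fin d) ℂ :=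
  Matrix.of fun a b =>
    ∑ x ∈ Finset.univ.filter (fun x : Fin N → Fin d => x ℓ = a),
      Ω x (Function.update x ℓ b)

/-- Quantum relative entropy `D(ρ‖σ) = Tr(ρ (log ρ - log σ))`, with the
convention `log 0 = 0` (so `0 log 0 = 0` on the kernel of `ρ`). -/
noncomputable def relEnt {n : Type*} [Fintype n] [DecidableEq n]
    (ρ σ : Matrix n n ℂ) : ℝ :=
  (Matrix.trace (ρ * (matFun Real.log ρ - matFun Real.log σ))).re

/-- Trace norm `‖A‖₁ = Tr √(AᴴA)`. -/
noncomputable def traceNorm {n : Type*} [Fintype n] [DecidableEq n]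
    (A : Matrix n n ℂ) : ℝ :=
  (Matrix.trace (((Matrix.posSemidef_conjTranspose_mul_self A).1.eigenvectorUnitary : Matrix n n ℂ) *
    Matrix.diagonal (fun i => ((√((Matrix.posSemidef_conjTranspose_mul_self A).1.eigenvalues i) : ℝ) : ℂ)) *
    (star (Matrix.posSemidef_conjTranspose_mul_self A).1.eigenvectorUnitary : Matrix n n ℂ))).re

/-- Matrix exponential, defined by the power series. -/
noncomputable def matExp {n : Type*} [Fintype n] [DecidableEq n]
    (A : Matrix n n ℂ) : Matrix n n ℂ :=
  ∑' k : ℕ, ((k.factorial : ℂ)⁻¹) • A ^ k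

/-- If a density matrix gives high weight to the spectral
window of `A` around `v`, then its expectation value of `A` is close to `v`. -/
theorem expectation_close_of_peaked
    {d : ℕ} (A : Matrix (Fin d) (Fin d) ℂ) (hA : A.IsHermitian)
    (v : ℝ) (hvA : |v| ≤ opNorm A)
    (η δ : ℝ) (hη : 0 ≤ η) (hδ : 0 ≤ δ)
    (ω : Matrix (Fin d) (Fin d) ℂ) (hω : ω.PosSemidef) (hω1 : ω.trace = 1)
    (hpeak : 1 - δ ≤ (Matrix.trace (ω *
      specProj A (v - η * specDiam A) (v + η * specDiam A))).re) :
    |(Matrix.trace (ω * A)).re - v| ≤ η * specDiam A + 2 * δ * opNorm A := by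
  rcases Nat.eq_zero_or_pos d with hd | hd
  · exfalso; subst hd
    simp [Matrix.trace] at hω1
  have hne : Nonempty (Fin d) := ⟨⟨0, hd⟩⟩
  set U : Matrix (Fin d) (Fin d) ℂ := (hA.eigenvectorUnitary : Matrix (Fin d) (Fin d) ℂ) with hU
  set lam := hA.eigenvalues with hlam
  set M := star U * ω * U with hMdef
  have hUunit : U ∈ Matrix.unitaryGroup (Fin d) ℂ := hA.eigenvectorUnitary.2
  have hM : M.PosSemidef := by
    have := hω.conjTranspose_mul_mul_same U
    simpa [hMdef, Matrix.star_eq_conjTranspose] using this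
  set p : Fin d → ℝ := fun i => (M i i).re with hp
  have hp0 : ∀ i, 0 ≤ p i := fun i => by
    have := hM.diag_nonneg (i := i)
    simpa using (Complex.le_def.mp this).1
  have hsum : ∑ i, p i = 1 := by
    have hM1 : M.trace = 1 := by
      have h1 : U * star U = 1 := Matrix.mem_unitaryGroup_iff.mp hUunit
      calc M.trace = (star U * (ω * U)).trace := by rw [hMdef, mul_assoc]
        _ = ((ω * U) * star U).trace := Matrix.trace_mul_comm _ _
        _ = (ω * (U * star U)).trace := by rw [mul_assoc]
        _ = 1 := by rw [h1, mul_one, hω1]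
    have : (∑ i, p i : ℝ) = (M.trace).re := by
      simp [Matrix.trace, Matrix.diag, hp, Complex.re_sum]
    rw [this, hM1]; simp
  have key : ∀ r : Fin d → ℝ,
      (Matrix.trace (ω * (U * Matrix.diagonal (fun i => (r i : ℂ)) * star U))).re
      = ∑ i, p i * r i := by
    intro r
    have h1 : ω * (U * Matrix.diagonal (fun i => (r i : ℂ)) * star U)
        = (ω * U * Matrix.diagonal (fun i => (r i : ℂ))) * star U := by
      simp [mul_assoc]
    rw [h1, Matrix.trace_mul_comm, ← mul_assoc, ← mul_assoc, ← hMdef]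
    simp [Matrix.trace, Matrix.diag, Matrix.mul_diagonal, Complex.re_sum, Complex.mul_re, hp]
  have hexp : (Matrix.trace (ω * A)).re = ∑ i, p i * lam i := by
    conv_lhs => rw [hA.spectral_theorem]
    exact key lam
  set a : ℝ := v - η * specDiam A with ha
  set b : ℝ := v + η * specDiam A with hb
  set f : ℝ → ℝ := Set.indicator (Set.Icc a b) fun _ => (1 : ℝ) with hf
  have hproj : (Matrix.trace (ω * specProj A a b)).re = ∑ i, p i * f (lam i) := by
    rw [specProj, matFun, dif_pos hA]
    exact key fun i => f (lam i)
  set S : Finset (Fin d) := Finset.univ.filter (fun i => lam i ∈ Set.Icc a b) with hSdef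
  have hfS : ∑ i, p i * f (lam i) = ∑ i ∈ S, p i := by
    rw [hSdef, Finset.sum_filter]
    refine Finset.sum_congr rfl fun i _ => ?_
    by_cases h : lam i ∈ Set.Icc a b <;> simp [hf, Set.indicator, h]
  have hS : 1 - δ ≤ ∑ i ∈ S, p i := by
    rw [← hfS, ← hproj]; exact hpeak
  have habs : ∀ i, |lam i| ≤ opNorm A := by
    intro i
    rw [opNorm, dif_pos hA]
    exact le_ciSup (f := fun j => |hA.eigenvalues j|) (Set.Finite.bddAbove (Set.finite_range _)) i
  have hop : 0 ≤ opNorm A := (abs_nonneg v).trans hvA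
  have hdiam : 0 ≤ specDiam A := by
    rw [specDiam, eigMax, eigMin, dif_pos hA, dif_pos hA]
    have h1 : ⨅ i, lam i ≤ lam ⟨0, hd⟩ := ciInf_le (f := lam) (Set.Finite.bddBelow (Set.finite_range _)) _
    have h2 : lam ⟨0, hd⟩ ≤ ⨆ i, lam i := le_ciSup (f := lam) (Set.Finite.bddAbove (Set.finite_range _)) _
    linarith
  have hSsum_le : ∑ i ∈ S, p i ≤ 1 := by
    rw [← hsum]
    exact Finset.sum_le_sum_of_subset_of_nonneg (Finset.subset_univ S) fun i _ _ => hp0 i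
  have hsplit : ∑ i ∈ S, p i + ∑ i ∈ Finset.univ.filter (fun i => ¬ lam i ∈ Set.Icc a b), p i
      = 1 := by
    rw [hSdef, Finset.sum_filter_add_sum_filter_not, hsum]
  set Sc : Finset (Fin d) := Finset.univ.filter (fun i => ¬ lam i ∈ Set.Icc a b) with hScdef
  have hScsum : ∑ i ∈ Sc, p i ≤ δ := by linarith
  have hdiff : (∑ i, p i * lam i) - v = ∑ i, p i * (lam i - v) := by
    simp only [mul_sub, Finset.sum_sub_distrib, ← Finset.sum_mul, hsum, one_mul]
  have hb1 : ∑ i ∈ S, p i * |lam i - v| ≤ (∑ i ∈ S, p i) * (η * specDiam A) := by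
    rw [Finset.sum_mul]
    refine Finset.sum_le_sum fun i hi => ?_
    have hmem := (Finset.mem_filter.mp hi).2
    have : |lam i - v| ≤ η * specDiam A := by
      rw [abs_le]
      constructor
      · have := hmem.1; rw [ha] at this; linarith
      · have := hmem.2; rw [hb] at this; linarith
    exact mul_le_mul_of_nonneg_left this (hp0 i)
  have hb2 : ∑ i ∈ Sc, p i * |lam i - v| ≤ (∑ i ∈ Sc, p i) * (2 * opNorm A) := by
    rw [Finset.sum_mul]
    refine Finset.sum_le_sum fun i _ => ?_
    have : |lam i - v| ≤ 2 * opNorm A := by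
      calc |lam i - v| ≤ |lam i| + |v| := abs_sub _ _
        _ ≤ opNorm A + opNorm A := add_le_add (habs i) hvA
        _ = 2 * opNorm A := by ring
    exact mul_le_mul_of_nonneg_left this (hp0 i)
  have habs_le : |(∑ i, p i * lam i) - v| ≤ ∑ i, p i * |lam i - v| := by
    rw [hdiff]
    calc |∑ i, p i * (lam i - v)| ≤ ∑ i, |p i * (lam i - v)| :=
          Finset.abs_sum_le_sum_abs _ _
      _ = ∑ i, p i * |lam i - v| := by
          refine Finset.sum_congr rfl fun i _ => ?_
          rw [abs_mul, abs_of_nonneg (hp0 i)]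
  have hsplit2 : ∑ i, p i * |lam i - v| =
      ∑ i ∈ S, p i * |lam i - v| + ∑ i ∈ Sc, p i * |lam i - v| := by
    rw [hSdef, hScdef, Finset.sum_filter_add_sum_filter_not]
  have hSc0 : 0 ≤ ∑ i ∈ Sc, p i := Finset.sum_nonneg fun i _ => hp0 i
  have hS0 : 0 ≤ ∑ i ∈ S, p i := Finset.sum_nonneg fun i _ => hp0 i
  rw [hexp]
  have hetaSig : 0 ≤ η * specDiam A := mul_nonneg hη hdiam
  nlinarith [habs_le, hsplit2, hb1, hb2, hSsum_le, hScsum,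
    mul_le_mul_of_nonneg_right hSsum_le hetaSig,
    mul_le_mul_of_nonneg_right hScsum (by linarith : (0:ℝ) ≤ 2 * opNorm A)]
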